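/- For the 3×3 branching matrix B₃ = [[q,0,0],[q²,q²,0],[q³,q³+1,q³]], the generating function (1 1 1)(I − tB₃)⁻¹(1 0 0)ᵀ equals (1 + q²t²)/((1−qt)(1−q²t)(1−q³t)). -/

import Mathlib

noncomputable section

/-- The field `ℚ(q,t)` of rational functions in two variables. -/
abbrev K : Type := FractionRing (MvPolynomial (Fin 2) ℚ)

/-- The variable `q`. -/
def qq : K := algebraMap (MvPolynomial (Fin 2) ℚ) K (MvPolynomial.X 0)

/-- The variable `t`. -/
def tt : K := algebraMap (MvPolynomial (Fin 2) ℚ) K (MvPolynomial.X 1)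

/-- The branching matrix `B₃ = [[q,0,0],[q²,q²,0],[q³,q³+1,q³]]` over `ℚ(q,t)`. -/
def B₃ : Matrix (Fin 3) (Fin 3) K :=
  !![qq, 0, 0; qq ^ 2, qq ^ 2, 0; qq ^ 3, qq ^ 3 + 1, qq ^ 3]

lemma map_ne_zero' {p : MvPolynomial (Fin 2) ℚ} (hp : p ≠ 0) :
    algebraMap (MvPolynomial (Fin 2) ℚ) K p ≠ 0 := fun h =>
  hp (IsFractionRing.injective (MvPolynomial (Fin 2) ℚ) K (by simpa using h))

lemma one_sub_ne (n : ℕ) : 1 - qq ^ n * tt ≠ 0 := by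
  have : (1 : K) - qq ^ n * tt =
      algebraMap (MvPolynomial (Fin 2) ℚ) K (1 - (MvPolynomial.X 0) ^ n * MvPolynomial.X 1) := by
    simp [qq, tt, map_sub, map_mul, map_pow]
  rw [this]
  apply map_ne_zero'
  intro h
  have := congrArg (MvPolynomial.eval (fun _ => 0)) h
  simp at this

/-- `I − tB₃` is invertible, and `(1 1 1)·(I − tB₃)⁻¹·(1 0 0)ᵀ`
equals `(1 + q²t²)/((1−qt)(1−q²t)(1−q³t))`. -/
theorem genfun_three :
    IsUnit (1 - tt • B₃) ∧
    (∑ i : Fin 3, (1 - tt • B₃)⁻¹ i 0) =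
      (1 + qq ^ 2 * tt ^ 2) /
        ((1 - qq * tt) * (1 - qq ^ 2 * tt) * (1 - qq ^ 3 * tt)) := by
  have h1 : (1 : K) - qq * tt ≠ 0 := by simpa using one_sub_ne 1
  have h2 : (1 : K) - qq ^ 2 * tt ≠ 0 := one_sub_ne 2
  have h3 : (1 : K) - qq ^ 3 * tt ≠ 0 := one_sub_ne 3
  have hA : (1 - tt • B₃) =
      !![1 - tt * qq, 0, 0;
         -(tt * qq ^ 2), 1 - tt * qq ^ 2, 0;
         -(tt * qq ^ 3), -(tt * (qq ^ 3 + 1)), 1 - tt * qq ^ 3] := by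
    ext i j
    fin_cases i <;> fin_cases j <;>
      simp [B₃, Matrix.one_apply, Matrix.smul_apply, sub_eq_add_neg]
  have hdet : (1 - tt • B₃).det =
      (1 - qq * tt) * (1 - qq ^ 2 * tt) * (1 - qq ^ 3 * tt) := by
    rw [hA, Matrix.det_fin_three]
    simp
    ring
  have hdetne : (1 - tt • B₃).det ≠ 0 := by
    rw [hdet]; exact mul_ne_zero (mul_ne_zero h1 h2) h3
  have hu : IsUnit (1 - tt • B₃) := by
    rw [Matrix.isUnit_iff_isUnit_det]
    exact isUnit_iff_ne_zero.mpr hdetne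
  refine ⟨hu, ?_⟩
  rw [Matrix.inv_def, hdet, Ring.inverse_eq_inv']
  rw [hA, Matrix.adjugate_fin_three]
  rw [Fin.sum_univ_three]
  simp only [Matrix.smul_apply, Matrix.cons_val', Matrix.cons_val_zero, Matrix.cons_val_one,
    Matrix.head_cons, Matrix.empty_val', Matrix.cons_val_fin_one, Matrix.head_fin_const,
    smul_eq_mul, Matrix.cons_val_two, Matrix.tail_cons, Matrix.of_apply]
  field_simp
  ring

end
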